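/- Let Λ be a quantum channel from d_B×d_B to d_A×d_A matrices, let U_{k,l} = X^k Z^l on ℂ^{d_A} (X, Z the shift and clock unitaries), and define the channels Γ_{k,l}(·) = U_{k,l} Λ(·) U_{k,l}†. Then for every quantum state σ on ℂ^{d_A} ⊗ ℂ^{d_B} and every POVM {N_{k,l}}_{k,l=0}^{d_A−1} on ℂ^{d_A} ⊗ ℂ^{d_A} (each N_{k,l} positive semidefinite, Σ_{k,l} N_{k,l} = 1): (1/d_A²) Σ_{k,l} tr(N_{k,l} (id_{d_A} ⊗ Γ_{k,l})(σ)) ≤ ‖(id_{d_A} ⊗ Λ)(σ)‖_∞ ≤ 1, where ‖·‖_∞ is the operator (spectral) norm. -/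

import Mathlib

open scoped ComplexOrder Kronecker
open Matrix

noncomputable section

/-- Square complex matrices of size `d`. -/
abbrev Mat (d : ℕ) : Type := Matrix (Fin d) (Fin d) ℂ

/-- Square complex matrices on the bipartite space `ℂ^dA ⊗ ℂ^dB`. -/
abbrev BMat (dA dB : ℕ) : Type := Matrix (Fin dA × Fin dB) (Fin dA × Fin dB) ℂ

/-- A quantum state: a positive semidefinite matrix of unit trace. -/
def IsState {n : Type*} [Fintype n] (ρ : Matrix n n ℂ) : Prop :=
  ρ.PosSemidef ∧ ρ.trace = 1

/-- Trace norm `‖A‖₁ = tr √(Aᴴ A)`. -/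
noncomputable def traceNorm {n : Type*} [Fintype n] [DecidableEq n] (A : Matrix n n ℂ) : ℝ :=
  (((Matrix.posSemidef_conjTranspose_mul_self A).1.eigenvectorUnitary *
      Matrix.diagonal (((↑) : ℝ → ℂ) ∘ (Real.sqrt ·) ∘
        (Matrix.posSemidef_conjTranspose_mul_self A).1.eigenvalues) *
      (star (Matrix.posSemidef_conjTranspose_mul_self A).1.eigenvectorUnitary : Matrix n n ℂ)).trace).re

/-- Operator (spectral) norm of a square complex matrix. -/
noncomputable def opNorm {n : Type*} [Fintype n] [DecidableEq n] (A : Matrix n n ℂ) : ℝ :=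
  ‖LinearMap.toContinuousLinearMap (Matrix.toEuclideanLin A)‖

/-- The partial action `id_{dA} ⊗ Λ` of a map `Λ` on block matrices. -/
def idTensor {dA dB dC : ℕ} (Λ : Mat dB → Mat dC) (ρ : BMat dA dB) : BMat dA dC :=
  fun p q => Λ (fun i j => ρ (p.1, i) (q.1, j)) p.2 q.2

/-- `Λ` is `k`-positive: `id_k ⊗ Λ` preserves positive semidefiniteness. -/
def kPositive (k : ℕ) {dB dC : ℕ} (Λ : Mat dB → Mat dC) : Prop :=
  ∀ ρ : BMat k dB, ρ.PosSemidef → (idTensor Λ ρ).PosSemidef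

/-- Completely positive: `k`-positive for every `k`. -/
def CompletelyPositive {dB dC : ℕ} (Λ : Mat dB → Mat dC) : Prop :=
  ∀ k : ℕ, kPositive k Λ

/-- Trace-preserving map. -/
def TracePreserving {dB dC : ℕ} (Λ : Mat dB → Mat dC) : Prop :=
  ∀ X : Mat dB, (Λ X).trace = X.trace

/-- A quantum channel: completely positive and trace-preserving linear map. -/
def IsChannel {dB dC : ℕ} (Λ : Mat dB →ₗ[ℂ] Mat dC) : Prop :=
  CompletelyPositive (⇑Λ) ∧ TracePreserving (⇑Λ)

/-- Schmidt rank of a bipartite vector: the minimal number of product terms in a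
decomposition `ψ = Σ_t a_t ⊗ b_t`. -/
def SchmidtRank {dA dB : ℕ} (ψ : Fin dA × Fin dB → ℂ) : ℕ :=
  sInf {r : ℕ | ∃ (a : Fin r → Fin dA → ℂ) (b : Fin r → Fin dB → ℂ),
    ∀ i j, ψ (i, j) = ∑ t, a t i * b t j}

/-- The Schmidt number of `ρ` is at most `k`: there is a pure-state decomposition
`ρ = Σ_i p_i |ψ_i⟩⟨ψ_i|` with all Schmidt ranks at most `k`. -/
def SchmidtNumberLE {dA dB : ℕ} (ρ : BMat dA dB) (k : ℕ) : Prop :=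
  ∃ (n : ℕ) (p : Fin n → ℝ) (ψ : Fin n → (Fin dA × Fin dB → ℂ)),
    (∀ i, 0 ≤ p i) ∧ (∀ i, ∑ x, ‖ψ i x‖ ^ 2 = 1) ∧
    (∀ i, SchmidtRank (ψ i) ≤ k) ∧
    ρ = ∑ i, (p i : ℂ) • Matrix.vecMulVec (ψ i) (star (ψ i))

/-- The (generalized) Schmidt-number robustness `R_{S_k}`. -/
noncomputable def robustness {dA dB : ℕ} (k : ℕ) (ρ : BMat dA dB) : ℝ :=
  sInf {R : ℝ | 0 ≤ R ∧ ∃ σ τ : BMat dA dB,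
    IsState σ ∧ SchmidtNumberLE σ k ∧ IsState τ ∧
    ρ = ((1 + R : ℝ) : ℂ) • σ - (R : ℂ) • τ}

/-- Partial trace over the first tensor factor. -/
def ptraceFirst {dA dB : ℕ} (ρ : BMat dA dB) : Mat dB :=
  fun i j => ∑ a : Fin dA, ρ (a, i) (a, j)

/-- Partial trace over the second tensor factor. -/
def ptraceSecond {dA dB : ℕ} (ρ : BMat dA dB) : Mat dA :=
  fun a b => ∑ i : Fin dB, ρ (a, i) (b, i)

/-- Embed a `BMat dA d` as the top-left block (in the second factor) of a `BMat dA (d+1)`. -/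
def padSnd {dA d : ℕ} (M : BMat dA d) : BMat dA (d + 1) :=
  fun p q =>
    if h : (p.2 : ℕ) < d ∧ (q.2 : ℕ) < d then M (p.1, ⟨p.2, h.1⟩) (q.1, ⟨q.2, h.2⟩) else 0

/-- The shift unitary `X|n⟩ = |n+1 mod d⟩`. -/
def shiftMat (d : ℕ) : Mat d :=
  fun i j => if (i : ℕ) = ((j : ℕ) + 1) % d then 1 else 0

/-- The clock unitary `Z|n⟩ = e^{2πin/d}|n⟩`. -/
def clockMat (d : ℕ) : Mat d :=
  fun i j => if i = j then Complex.exp (2 * Real.pi * Complex.I * (i : ℕ) / d) else 0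

/-- The Heisenberg-Weyl unitary `X^k Z^l`. -/
def heisenbergU (d k l : ℕ) : Mat d := shiftMat d ^ k * clockMat d ^ l

/-- The maximally entangled unit vector `|φ⁺⟩ = (1/√d) Σ_n |n⟩ ⊗ |n⟩`. -/
def phiPlus (d : ℕ) : Fin d × Fin d → ℂ :=
  fun p => if p.1 = p.2 then ((1 / Real.sqrt d : ℝ) : ℂ) else 0

/-- The projection `|φ⁺⟩⟨φ⁺|`. -/
def phiProj (d : ℕ) : BMat d d := Matrix.vecMulVec (phiPlus d) (star (phiPlus d))

/-- The Bell basis projection `M_{k,l} = (1 ⊗ X^k Z^l)|φ⁺⟩⟨φ⁺|(1 ⊗ X^k Z^l)ᴴ`. -/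
def bellProj (d k l : ℕ) : BMat d d :=
  ((1 : Mat d) ⊗ₖ heisenbergU d k l) * phiProj d * ((1 : Mat d) ⊗ₖ heisenbergU d k l)ᴴ

/-- The canonical inclusion isometry `ℂ^d → ℂ^D`. -/
def inclMat (d D : ℕ) : Matrix (Fin D) (Fin d) ℂ :=
  fun i j => if (i : ℕ) = (j : ℕ) then 1 else 0

/-- Optimal guessing probability for the discrimination of the (sub)channels `Λ i`
applied with a priori probabilities `p i`, using the input state `ρ`. -/
noncomputable def pguess {dA dB D N : ℕ} (p : Fin N → ℝ) (Λ : Fin N → (Mat dB → Mat D))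
    (ρ : BMat dA dB) : ℝ :=
  sSup {x : ℝ | ∃ M : Fin N → Matrix (Fin dA × Fin D) (Fin dA × Fin D) ℂ,
    (∀ i, (M i).PosSemidef) ∧ (∑ i, M i) = 1 ∧
    x = ∑ i, p i * ((M i * idTensor (Λ i) ρ).trace).re}

/-- Optimal guessing probability over all input states of Schmidt number at most `k`. -/
noncomputable def pguessK (dA : ℕ) {dB D N : ℕ} (k : ℕ) (p : Fin N → ℝ)
    (Λ : Fin N → (Mat dB → Mat D)) : ℝ :=
  sSup {x : ℝ | ∃ σ : BMat dA dB, IsState σ ∧ SchmidtNumberLE σ k ∧ x = pguess p Λ σ}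

end


section SqrtCompat
open scoped MatrixOrder

noncomputable def Matrix.PosSemidef.sqrt {n : Type*} [Fintype n] [DecidableEq n]
    {M : Matrix n n ℂ} (_hM : M.PosSemidef) : Matrix n n ℂ := CFC.sqrt M

lemma Matrix.PosSemidef.posSemidef_sqrt {n : Type*} [Fintype n] [DecidableEq n]
    {M : Matrix n n ℂ} (hM : M.PosSemidef) : hM.sqrt.PosSemidef :=
  (CFC.sqrt_nonneg M).posSemidef

lemma Matrix.PosSemidef.sqrt_mul_self {n : Type*} [Fintype n] [DecidableEq n]
    {M : Matrix n n ℂ} (hM : M.PosSemidef) : hM.sqrt * hM.sqrt = M :=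
  CFC.sqrt_mul_sqrt_self M hM.nonneg

end SqrtCompat

section Aux
open scoped ComplexOrder Kronecker
open Matrix

/-! ### Auxiliary lemmas -/

lemma quad_le_opNorm' {n : Type*} [Fintype n] [DecidableEq n] (ρ : Matrix n n ℂ) (v : n → ℂ) :
    (star v ⬝ᵥ ρ *ᵥ v).re ≤ opNorm ρ * ∑ j, ‖v j‖ ^ 2 := by
  set T := LinearMap.toContinuousLinearMap (Matrix.toEuclideanLin ρ)
  set w : EuclideanSpace ℂ n := (WithLp.equiv 2 _).symm v
  have h1 : star v ⬝ᵥ ρ *ᵥ v = inner ℂ w (T w) := by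
    exact dotProduct_comm (star v) (ρ *ᵥ v)
  have h2 : ‖w‖ ^ 2 = ∑ j, ‖v j‖ ^ 2 := by
    rw [EuclideanSpace.norm_eq, Real.sq_sqrt (by positivity)]
    rfl
  calc (star v ⬝ᵥ ρ *ᵥ v).re ≤ ‖(inner ℂ w (T w) : ℂ)‖ := by
        rw [h1]; exact Complex.re_le_norm _
    _ ≤ ‖w‖ * ‖T w‖ := norm_inner_le_norm _ _
    _ ≤ ‖w‖ * (‖T‖ * ‖w‖) := mul_le_mul_of_nonneg_left (T.le_opNorm w) (norm_nonneg _)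
    _ = opNorm ρ * ∑ j, ‖v j‖ ^ 2 := by rw [← h2]; unfold opNorm; ring

lemma trace_mul_eq_sum_quad' {n : Type*} [Fintype n] [DecidableEq n] {M : Matrix n n ℂ}
    (hM : M.PosSemidef) (ρ : Matrix n n ℂ) :
    (M * ρ).trace = ∑ i, star (fun j => hM.sqrt j i) ⬝ᵥ ρ *ᵥ (fun j => hM.sqrt j i) := by
  set B := hM.sqrt with hB
  have hBH : Bᴴ = B := hM.posSemidef_sqrt.isHermitian
  have hMB : M = B * B := (hM.sqrt_mul_self).symm
  rw [hMB, Matrix.mul_assoc, Matrix.trace_mul_comm B (B * ρ)]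
  rw [Matrix.trace]
  congr 1; ext i
  simp only [Matrix.diag_apply, Matrix.mul_apply, dotProduct, Matrix.mulVec,
    dotProduct, Finset.sum_mul, Finset.mul_sum, Pi.star_apply]
  rw [Finset.sum_comm]
  congr 1; ext j
  congr 1; ext k
  have : star (B j i) = B i j := by rw [← Matrix.conjTranspose_apply, hBH]
  rw [this]; ring

lemma trace_mul_nonneg'' {n : Type*} [Fintype n] [DecidableEq n] {M ρ : Matrix n n ℂ}
    (hM : M.PosSemidef) (hρ : ρ.PosSemidef) : 0 ≤ (M * ρ).trace := by
  rw [trace_mul_eq_sum_quad' hM]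
  exact Finset.sum_nonneg fun i _ => hρ.dotProduct_mulVec_nonneg _

lemma trace_mul_le_opNorm' {n : Type*} [Fintype n] [DecidableEq n] {M ρ : Matrix n n ℂ}
    (hM : M.PosSemidef) :
    ((M * ρ).trace).re ≤ opNorm ρ * (M.trace).re := by
  rw [trace_mul_eq_sum_quad' hM]
  set B := hM.sqrt with hB
  have hBH : Bᴴ = B := hM.posSemidef_sqrt.isHermitian
  have hMB : M = B * B := (hM.sqrt_mul_self).symm
  have htr : (M.trace).re = ∑ i, ∑ j, ‖B j i‖ ^ 2 := by
    rw [hMB, Matrix.trace, Complex.re_sum]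
    congr 1; ext i
    rw [Matrix.diag_apply, Matrix.mul_apply, Complex.re_sum]
    congr 1; ext j
    have h1 : B i j = star (B j i) := by rw [← Matrix.conjTranspose_apply, hBH]
    rw [h1]
    have h2 : star (B j i) * B j i = ((‖B j i‖ ^ 2 : ℝ) : ℂ) := by
      rw [Complex.star_def, ← Complex.normSq_eq_conj_mul_self, Complex.normSq_eq_norm_sq]
    rw [h2, Complex.ofReal_re]
  rw [htr, Complex.re_sum, Finset.mul_sum]
  exact Finset.sum_le_sum fun i _ => quad_le_opNorm' ρ _

lemma opNorm_le_trace' {n : Type*} [Fintype n] [DecidableEq n] {ρ : Matrix n n ℂ}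
    (hρ : ρ.PosSemidef) : opNorm ρ ≤ (ρ.trace).re := by
  set C := hρ.sqrt with hC
  have hCH : Cᴴ = C := hρ.posSemidef_sqrt.isHermitian
  have hCC : C * C = ρ := hρ.sqrt_mul_self
  set g : n → ℝ := fun i => Real.sqrt (∑ k, ‖C k i‖ ^ 2) with hg
  have hg0 : ∀ i, 0 ≤ g i := fun i => Real.sqrt_nonneg _
  have hgsq : ∀ i, g i ^ 2 = ∑ k, ‖C k i‖ ^ 2 := fun i => Real.sq_sqrt (by positivity)
  have hij : ∀ i j, ‖ρ i j‖ ≤ g i * g j := by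
    intro i j
    have h1 : ρ i j = star (fun k => C k i) ⬝ᵥ (fun k => C k j) := by
      rw [← hCC, Matrix.mul_apply, dotProduct]
      congr 1; ext k
      have : star (C k i) = C i k := by rw [← Matrix.conjTranspose_apply, hCH]
      rw [Pi.star_apply, this]
    rw [h1]
    calc ‖star (fun k => C k i) ⬝ᵥ (fun k => C k j)‖
        ≤ ∑ k, ‖star (C k i) * C k j‖ := norm_sum_le _ _
      _ = ∑ k, ‖C k i‖ * ‖C k j‖ := by
          congr 1; ext k; rw [norm_mul, norm_star]
      _ ≤ g i * g j := by
          have h := Finset.sum_mul_sq_le_sq_mul_sq Finset.univ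
            (fun k => ‖C k i‖) (fun k => ‖C k j‖)
          have h2 : (∑ k, ‖C k i‖ * ‖C k j‖) ^ 2 ≤ (g i * g j) ^ 2 := by
            rw [mul_pow, hgsq, hgsq]; exact h
          have h3 : 0 ≤ ∑ k, ‖C k i‖ * ‖C k j‖ := by positivity
          nlinarith [mul_nonneg (hg0 i) (hg0 j)]
  have hdiag : ∀ i, (ρ i i).re = g i ^ 2 := by
    intro i
    rw [hgsq]
    rw [← hCC, Matrix.mul_apply, Complex.re_sum]
    congr 1; ext k
    have h1 : C i k = star (C k i) := by rw [← Matrix.conjTranspose_apply, hCH]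
    rw [h1]
    have h2 : star (C k i) * C k i = ((‖C k i‖ ^ 2 : ℝ) : ℂ) := by
      rw [Complex.star_def, ← Complex.normSq_eq_conj_mul_self, Complex.normSq_eq_norm_sq]
    rw [h2, Complex.ofReal_re]
  set t : ℝ := ∑ i, g i ^ 2 with ht
  have htr : (ρ.trace).re = t := by
    rw [Matrix.trace, Complex.re_sum]; exact Finset.sum_congr rfl fun i _ => hdiag i
  have ht0 : 0 ≤ t := Finset.sum_nonneg fun i _ => sq_nonneg _
  rw [htr]
  apply ContinuousLinearMap.opNorm_le_bound _ ht0
  intro w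
  set v : n → ℂ := (WithLp.equiv 2 _) w with hv
  have hnw : ‖w‖ ^ 2 = ∑ j, ‖v j‖ ^ 2 := by
    rw [EuclideanSpace.norm_eq, Real.sq_sqrt (by positivity)]; rfl
  have hTw : ‖(LinearMap.toContinuousLinearMap (Matrix.toEuclideanLin ρ)) w‖ ^ 2
      = ∑ i, ‖(ρ *ᵥ v) i‖ ^ 2 := by
    rw [show (LinearMap.toContinuousLinearMap (Matrix.toEuclideanLin ρ)) w
        = (WithLp.equiv 2 (n → ℂ)).symm (ρ *ᵥ v) from rfl]
    rw [EuclideanSpace.norm_eq, Real.sq_sqrt (by positivity)]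
    rfl
  set s : ℝ := ∑ j, g j * ‖v j‖ with hs
  have hrow : ∀ i, ‖(ρ *ᵥ v) i‖ ≤ g i * s := by
    intro i
    calc ‖∑ j, ρ i j * v j‖ ≤ ∑ j, ‖ρ i j * v j‖ := norm_sum_le _ _
      _ ≤ ∑ j, (g i * g j) * ‖v j‖ := by
          refine Finset.sum_le_sum fun j _ => ?_
          rw [norm_mul]
          exact mul_le_mul_of_nonneg_right (hij i j) (norm_nonneg _)
      _ = g i * s := by rw [hs, Finset.mul_sum]; congr 1; ext j; ring
  have hsv : s ^ 2 ≤ t * ‖w‖ ^ 2 := by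
    rw [hnw, hs]
    have h := Finset.sum_mul_sq_le_sq_mul_sq Finset.univ g (fun j => ‖v j‖)
    simpa [ht] using h
  have key : ‖(LinearMap.toContinuousLinearMap (Matrix.toEuclideanLin ρ)) w‖ ^ 2
      ≤ (t * ‖w‖) ^ 2 := by
    rw [hTw]
    calc ∑ i, ‖(ρ *ᵥ v) i‖ ^ 2 ≤ ∑ i, (g i * s) ^ 2 := by
          refine Finset.sum_le_sum fun i _ => ?_
          exact pow_le_pow_left₀ (norm_nonneg _) (hrow i) 2
      _ = t * s ^ 2 := by rw [ht, Finset.sum_mul]; congr 1; ext i; ring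
      _ ≤ t * (t * ‖w‖ ^ 2) := mul_le_mul_of_nonneg_left hsv ht0
      _ = (t * ‖w‖) ^ 2 := by ring
  have h := Real.sqrt_le_sqrt key
  rwa [Real.sqrt_sq (norm_nonneg _), Real.sqrt_sq (mul_nonneg ht0 (norm_nonneg _))] at h

lemma trace_idTensor' {dA dB dC : ℕ} (Λ : Mat dB → Mat dC) (hΛ : TracePreserving Λ)
    (σ : BMat dA dB) : (idTensor Λ σ).trace = σ.trace := by
  rw [Matrix.trace, Matrix.trace, Fintype.sum_prod_type, Fintype.sum_prod_type]
  refine Finset.sum_congr rfl fun a _ => ?_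
  have h := hΛ (fun i j => σ (a, i) (a, j))
  unfold Matrix.trace at h
  exact h

lemma one_kron_conjTranspose' {dA d : ℕ} (U : Mat d) :
    ((1 : Mat dA) ⊗ₖ U)ᴴ = (1 : Mat dA) ⊗ₖ Uᴴ := by
  ext ⟨a, i⟩ ⟨b, j⟩
  by_cases h : a = b <;>
    simp [Matrix.conjTranspose_apply, Matrix.one_apply, h, eq_comm]

lemma idTensor_conj' {dA dB : ℕ} (Λ : Mat dB → Mat dA) (U : Mat dA) (σ : BMat dA dB) :
    idTensor (fun X => U * Λ X * Uᴴ) σ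
      = ((1 : Mat dA) ⊗ₖ U) * idTensor Λ σ * ((1 : Mat dA) ⊗ₖ U)ᴴ := by
  rw [one_kron_conjTranspose']
  ext ⟨a, i⟩ ⟨b, j⟩
  simp only [idTensor, Matrix.mul_apply, Fintype.sum_prod_type, Matrix.kroneckerMap_apply,
    Matrix.one_apply, Matrix.conjTranspose_apply, ite_mul, one_mul, zero_mul,
    mul_ite, mul_one, mul_zero]
  simp [Finset.sum_ite_eq, Finset.sum_ite_eq', Finset.mul_sum, Finset.sum_mul, mul_assoc]

lemma shiftMat_eq' (d : ℕ) [NeZero d] (i j : Fin d) :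
    shiftMat d i j = if i = j + 1 then 1 else 0 := by
  have h : ((j + 1 : Fin d) : ℕ) = ((j : ℕ) + 1) % d := by
    rw [Fin.add_def, Fin.val_one']
    conv_rhs => rw [Nat.add_mod, Nat.mod_eq_of_lt j.isLt]
  simp only [shiftMat, ← h, Fin.ext_iff]

lemma shift_mem_unitary' (d : ℕ) : shiftMat d ∈ unitary (Mat d) := by
  rw [Unitary.mem_iff, Matrix.star_eq_conjTranspose]
  constructor
  · ext i j
    haveI : NeZero d := ⟨(Fin.pos i).ne'⟩
    simp only [Matrix.mul_apply, Matrix.conjTranspose_apply, shiftMat_eq',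
      apply_ite (star : ℂ → ℂ), star_one, star_zero, ite_mul, one_mul, zero_mul]
    rw [Finset.sum_ite_eq' Finset.univ (i + 1)]
    simp [Matrix.one_apply, add_left_inj]
  · ext i j
    haveI : NeZero d := ⟨(Fin.pos i).ne'⟩
    have hc : ∀ a k : Fin d, (a = k + 1) = (k = a - 1) := by
      intro a k
      apply propext; constructor <;> intro h
      · rw [h]; simp
      · rw [h]; simp
    simp only [Matrix.mul_apply, Matrix.conjTranspose_apply, shiftMat_eq',
      apply_ite (star : ℂ → ℂ), star_one, star_zero, mul_ite, mul_one, mul_zero, hc,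
      ite_mul, one_mul, zero_mul]
    rw [Finset.sum_ite_eq' Finset.univ (j - 1)]
    simp [Matrix.one_apply, sub_left_inj, eq_comm]

lemma clock_mem_unitary' (d : ℕ) : clockMat d ∈ unitary (Mat d) := by
  have hdiag : clockMat d
      = Matrix.diagonal (fun i : Fin d => Complex.exp (2 * Real.pi * Complex.I * (i : ℕ) / d)) := by
    ext i j
    simp [clockMat, Matrix.diagonal_apply]
  have hval : ∀ i : Fin d,
      star (Complex.exp (2 * Real.pi * Complex.I * (i : ℕ) / d))
        * Complex.exp (2 * Real.pi * Complex.I * (i : ℕ) / d) = 1 := by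
    intro i
    rw [Complex.star_def, ← Complex.exp_conj, ← Complex.exp_add]
    rw [show ((starRingEnd ℂ) (2 * (Real.pi : ℂ) * Complex.I * ((i : ℕ) : ℂ) / (d : ℂ)))
        = -(2 * (Real.pi : ℂ) * Complex.I * ((i : ℕ) : ℂ) / (d : ℂ)) by
      simp [map_div₀, Complex.conj_I, map_ofNat]
      ring]
    simp
  rw [Unitary.mem_iff, Matrix.star_eq_conjTranspose, hdiag, Matrix.diagonal_conjTranspose]
  constructor
  · rw [Matrix.diagonal_mul_diagonal]
    ext i j
    simp only [Pi.star_apply, Matrix.diagonal_apply, Matrix.one_apply]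
    split <;> simp_all [hval]
  · rw [Matrix.diagonal_mul_diagonal]
    ext i j
    simp only [Pi.star_apply, Matrix.diagonal_apply, Matrix.one_apply]
    split <;> [skip; rfl]
    rw [mul_comm]; exact hval _

lemma heisenbergU_mem_unitary' (d k l : ℕ) : heisenbergU d k l ∈ unitary (Mat d) :=
  mul_mem (pow_mem (shift_mem_unitary' d) k) (pow_mem (clock_mem_unitary' d) l)

lemma heisenbergU_mul_conjTranspose' (d k l : ℕ) :
    heisenbergU d k l * (heisenbergU d k l)ᴴ = 1 := by
  rw [← Matrix.star_eq_conjTranspose]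
  exact Unitary.mul_star_self_of_mem (heisenbergU_mem_unitary' d k l)

end Aux

/-- for any POVM, the average success probability on the shifted channels
`Γ_{k,l} = U_{k,l} Λ(·) U_{k,l}ᴴ` with input `σ` is bounded by `‖(id ⊗ Λ)(σ)‖_∞ ≤ 1`. -/
theorem stmt11 {dA dB : ℕ} (Λ : Mat dB →ₗ[ℂ] Mat dA) (hΛ : IsChannel Λ)
    (σ : BMat dA dB) (hσ : IsState σ)
    (N : Fin dA → Fin dA → BMat dA dA)
    (hNpos : ∀ k l, (N k l).PosSemidef) (hNsum : (∑ k : Fin dA, ∑ l : Fin dA, N k l) = 1) :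
    (1 / (dA : ℂ) ^ 2) * ∑ k : Fin dA, ∑ l : Fin dA,
        (N k l *
          idTensor (fun X => heisenbergU dA k l * Λ X * (heisenbergU dA k l)ᴴ) σ).trace
      ≤ ((opNorm (idTensor (⇑Λ) σ) : ℝ) : ℂ) ∧ opNorm (idTensor (⇑Λ) σ) ≤ 1 := by
  classical
  obtain ⟨hCP, hTP⟩ := hΛ
  set ρ : BMat dA dA := idTensor (⇑Λ) σ with hρdef
  have hρpsd : ρ.PosSemidef := hCP dA σ hσ.1
  have hρtr : ρ.trace = 1 := by rw [hρdef, trace_idTensor' _ hTP, hσ.2]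
  have hop0 : 0 ≤ opNorm ρ := norm_nonneg _
  have hop1 : opNorm ρ ≤ 1 := by
    have h := opNorm_le_trace' hρpsd
    rwa [hρtr, Complex.one_re] at h
  refine ⟨?_, hop1⟩
  -- the conjugated POVM elements
  set V : Fin dA → Fin dA → BMat dA dA :=
    fun k l => (1 : Mat dA) ⊗ₖ heisenbergU dA k l with hV
  set M : Fin dA → Fin dA → BMat dA dA :=
    fun k l => (V k l)ᴴ * N k l * V k l with hM
  have hVV : ∀ k l, V k l * (V k l)ᴴ = 1 := by
    intro k l
    rw [hV, one_kron_conjTranspose', ← Matrix.mul_kronecker_mul,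
      heisenbergU_mul_conjTranspose', one_mul, Matrix.one_kronecker_one]
  have hMpsd : ∀ k l, (M k l).PosSemidef := fun k l =>
    (hNpos k l).conjTranspose_mul_mul_same (V k l)
  have hterm : ∀ k l : Fin dA,
      (N k l * idTensor (fun X => heisenbergU dA k l * Λ X * (heisenbergU dA k l)ᴴ) σ).trace
        = (M k l * ρ).trace := by
    intro k l
    rw [idTensor_conj' (⇑Λ) (heisenbergU dA k l) σ]
    show (N k l * (V k l * ρ * (V k l)ᴴ)).trace = (M k l * ρ).trace
    have h1 : N k l * (V k l * ρ * (V k l)ᴴ) = (N k l * V k l * ρ) * (V k l)ᴴ := by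
      simp only [Matrix.mul_assoc]
    rw [h1, Matrix.trace_mul_comm]
    show ((V k l)ᴴ * (N k l * V k l * ρ)).trace = ((V k l)ᴴ * N k l * V k l * ρ).trace
    simp only [Matrix.mul_assoc]
  have hMtr : ∀ k l, (M k l).trace = (N k l).trace := by
    intro k l
    show ((V k l)ᴴ * N k l * V k l).trace = (N k l).trace
    have h1 : (V k l)ᴴ * N k l * V k l = (V k l)ᴴ * (N k l * V k l) := by
      simp only [Matrix.mul_assoc]
    rw [h1, Matrix.trace_mul_comm, Matrix.mul_assoc, hVV, Matrix.mul_one]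
  have hMtrsum : ∑ k : Fin dA, ∑ l : Fin dA, (M k l).trace = (((dA : ℝ) ^ 2 : ℝ) : ℂ) := by
    have h1 : ∑ k : Fin dA, ∑ l : Fin dA, (M k l).trace
        = (∑ k : Fin dA, ∑ l : Fin dA, N k l).trace := by
      rw [Matrix.trace_sum]
      refine Finset.sum_congr rfl fun k _ => ?_
      rw [Matrix.trace_sum]
      exact Finset.sum_congr rfl fun l _ => hMtr k l
    rw [h1, hNsum, Matrix.trace_one]
    push_cast
    simp [sq]
  -- rewrite the sum
  rw [show (∑ k : Fin dA, ∑ l : Fin dA,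
      (N k l * idTensor (fun X => heisenbergU dA k l * Λ X * (heisenbergU dA k l)ᴴ) σ).trace)
      = ∑ k : Fin dA, ∑ l : Fin dA, (M k l * ρ).trace from
    Finset.sum_congr rfl fun k _ => Finset.sum_congr rfl fun l _ => hterm k l]
  set S : ℂ := ∑ k : Fin dA, ∑ l : Fin dA, (M k l * ρ).trace with hS
  have hSnn : 0 ≤ S :=
    Finset.sum_nonneg fun k _ => Finset.sum_nonneg fun l _ =>
      trace_mul_nonneg'' (hMpsd k l) hρpsd
  have hSim : S.im = 0 := ((Complex.nonneg_iff.mp hSnn).2).symm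
  have hSre : S.re ≤ opNorm ρ * (dA : ℝ) ^ 2 := by
    have h1 : S.re = ∑ k : Fin dA, ∑ l : Fin dA, ((M k l * ρ).trace).re := by
      rw [hS, Complex.re_sum]
      exact Finset.sum_congr rfl fun k _ => Complex.re_sum _ _
    have h2 : ∑ k : Fin dA, ∑ l : Fin dA, ((M k l).trace).re = (dA : ℝ) ^ 2 := by
      have h3 := congrArg Complex.re hMtrsum
      rw [Complex.re_sum] at h3
      simp only [Complex.re_sum] at h3
      rwa [Complex.ofReal_re] at h3
    rw [h1, ← h2, Finset.mul_sum]
    refine Finset.sum_le_sum fun k _ => ?_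
    rw [Finset.mul_sum]
    exact Finset.sum_le_sum fun l _ => trace_mul_le_opNorm' (hMpsd k l)
  -- conclude
  rw [Complex.le_def]
  constructor
  · rw [show (1 / (dA : ℂ) ^ 2) * S = ((1 / (dA : ℝ) ^ 2 : ℝ) : ℂ) * S by push_cast; ring,
      Complex.re_ofReal_mul, Complex.ofReal_re]
    rcases Nat.eq_zero_or_pos dA with h | h
    · subst h; simpa using hop0
    · have hd2 : (0 : ℝ) < (dA : ℝ) ^ 2 := by positivity
      calc (1 / (dA : ℝ) ^ 2) * S.re ≤ (1 / (dA : ℝ) ^ 2) * (opNorm ρ * (dA : ℝ) ^ 2) :=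
            mul_le_mul_of_nonneg_left hSre (by positivity)
        _ = opNorm ρ := by field_simp
  · rw [show (1 / (dA : ℂ) ^ 2) * S = ((1 / (dA : ℝ) ^ 2 : ℝ) : ℂ) * S by push_cast; ring,
      Complex.im_ofReal_mul, hSim, Complex.ofReal_im, mul_zero]
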